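/- Let A ∈ ℝ^{m×n} and suppose X = {x | Ax ≤ b_x} and Y = {x | Ax ≤ b_y} are nonempty compact H-polytopes. Then there exists a constant L (depending only on A and the chosen norms) such that d_H(X, Y) ≤ L·‖b_x − b_y‖ for all such right-hand sides b_x, b_y, where d_H is the Hausdorff metric induced by a norm on ℝⁿ and ‖·‖ is a norm on ℝᵐ. -/

import Mathlib

open Matrix Finset Topology Filter

variable {m n : ℕ}

/-- The convex cone generated by the rows of `A` indexed by `s`. -/
def coneOf (A : Matrix (Fin m) (Fin n) ℝ) (s : Finset (Fin m)) : Set (Fin n → ℝ) :=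
  {w | ∃ l : Fin m → ℝ, (∀ i, 0 ≤ l i) ∧ w = ∑ i ∈ s, l i • A i}

lemma coneOf_mono (A : Matrix (Fin m) (Fin n) ℝ) {s t : Finset (Fin m)} (hst : s ⊆ t) :
    coneOf A s ⊆ coneOf A t := by
  rintro w ⟨l, hl, rfl⟩
  classical
  refine ⟨fun i => if i ∈ s then l i else 0, fun i => ?_, ?_⟩
  · dsimp only; split
    · exact hl i
    · exact le_rfl
  · rw [← Finset.sum_subset hst (fun i _ hi => by simp [hi])]
    exact Finset.sum_congr rfl fun i hi => by simp [hi]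

lemma zero_mem_coneOf (A : Matrix (Fin m) (Fin n) ℝ) (s : Finset (Fin m)) :
    (0 : Fin n → ℝ) ∈ coneOf A s :=
  ⟨0, fun i => le_rfl, by simp⟩

lemma convex_coneOf (A : Matrix (Fin m) (Fin n) ℝ) (s : Finset (Fin m)) :
    Convex ℝ (coneOf A s) := by
  rintro w₁ ⟨l₁, hl₁, rfl⟩ w₂ ⟨l₂, hl₂, rfl⟩ a b ha hb hab
  refine ⟨fun i => a * l₁ i + b * l₂ i,
    fun i => add_nonneg (mul_nonneg ha (hl₁ i)) (mul_nonneg hb (hl₂ i)), ?_⟩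
  rw [Finset.smul_sum, Finset.smul_sum, ← Finset.sum_add_distrib]
  exact Finset.sum_congr rfl fun i _ => by simp [smul_smul, add_smul]

lemma caratheodory_cone (A : Matrix (Fin m) (Fin n) ℝ) (s : Finset (Fin m)) :
    ∀ v ∈ coneOf A s, ∃ t, t ⊆ s ∧ LinearIndependent ℝ (fun i : t => A i) ∧ v ∈ coneOf A t := by
  classical
  induction s using Finset.strongInduction with
  | _ s ih =>
    intro v hv
    by_cases hind : LinearIndependent ℝ (fun i : s => A i)
    · exact ⟨s, Finset.Subset.refl s, hind, hv⟩
    · obtain ⟨g, hg0, j, hgj⟩ := Fintype.not_linearIndependent_iff.mp hind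
      set c : Fin m → ℝ := fun i => if h : i ∈ s then g ⟨i, h⟩ else 0 with hc
      have hcs : ∑ i ∈ s, c i • A i = 0 := by
        rw [← Finset.sum_attach s (fun i => c i • A i)]
        rw [← hg0]
        refine Finset.sum_congr rfl fun i _ => ?_
        simp [hc, i.2]
      have hcj : c (j : Fin m) = g j := by simp [hc, j.2]
      set d : Fin m → ℝ := if H : ∃ i ∈ s, 0 < c i then c else -c with hd
      have hds : ∑ i ∈ s, d i • A i = 0 := by
        rw [hd]; split
        · exact hcs
        · simp only [Pi.neg_apply, neg_smul, Finset.sum_neg_distrib]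
          rw [hcs]; simp
      have hdex : ∃ i ∈ s, 0 < d i := by
        rw [hd]; split
        · assumption
        · rename_i H
          push_neg at H
          refine ⟨j, j.2, ?_⟩
          have h1 := H j j.2
          have h2 : c (j : Fin m) ≠ 0 := by rw [hcj]; exact hgj
          simp only [Pi.neg_apply]
          cases lt_or_eq_of_le h1 with
          | inl h => linarith
          | inr h => exact absurd h h2
      obtain ⟨l, hl, hvl⟩ := hv
      set R : Finset (Fin m) := s.filter (fun i => 0 < d i) with hR
      have hRne : R.Nonempty := by
        obtain ⟨i, his, hdi⟩ := hdex
        exact ⟨i, Finset.mem_filter.mpr ⟨his, hdi⟩⟩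
      obtain ⟨i₀, hi₀R, hmin⟩ := R.exists_min_image (fun i => l i / d i) hRne
      have hi₀s : i₀ ∈ s := (Finset.mem_filter.mp hi₀R).1
      have hdi₀ : 0 < d i₀ := (Finset.mem_filter.mp hi₀R).2
      set τ : ℝ := l i₀ / d i₀ with hτ
      have hτ0 : 0 ≤ τ := div_nonneg (hl i₀) hdi₀.le
      set l' : Fin m → ℝ := fun i => l i - τ * d i with hl'
      have hl'0 : ∀ i ∈ s, 0 ≤ l' i := by
        intro i his
        by_cases hdi : 0 < d i
        · have hiR : i ∈ R := Finset.mem_filter.mpr ⟨his, hdi⟩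
          have := hmin i hiR
          have : τ * d i ≤ l i := (le_div_iff₀ hdi).mp this
          simp only [hl']; linarith
        · push_neg at hdi
          have : τ * d i ≤ 0 := mul_nonpos_of_nonneg_of_nonpos hτ0 hdi
          have := hl i
          simp only [hl']; linarith
      have hl'i₀ : l' i₀ = 0 := by
        simp only [hl', hτ]
        field_simp
        ring
      have hv' : v = ∑ i ∈ s, l' i • A i := by
        simp only [hl', sub_smul, mul_smul, Finset.sum_sub_distrib]
        rw [← Finset.smul_sum, hds, smul_zero, sub_zero, hvl]
      have hv'' : v = ∑ i ∈ s.erase i₀, l' i • A i := by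
        rw [hv', ← Finset.sum_erase s (by rw [hl'i₀, zero_smul])]
      have hmem : v ∈ coneOf A (s.erase i₀) := by
        refine ⟨fun i => if i ∈ s.erase i₀ then l' i else 0, fun i => ?_, ?_⟩
        · dsimp only; split
          · rename_i h; exact hl'0 i (Finset.mem_of_mem_erase h)
          · exact le_rfl
        · rw [hv'']
          exact Finset.sum_congr rfl fun i hi => by simp [hi]
      obtain ⟨t, hts, hind', hvt⟩ := ih (s.erase i₀) (Finset.erase_ssubset hi₀s) v hmem
      exact ⟨t, hts.trans (Finset.erase_subset _ _), hind', hvt⟩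

noncomputable def rowMap (A : Matrix (Fin m) (Fin n) ℝ) (t : Finset (Fin m)) :
    (↥t → ℝ) →ₗ[ℝ] (Fin n → ℝ) where
  toFun l := ∑ i : t, l i • A (i : Fin m)
  map_add' l₁ l₂ := by
    simp [add_smul, Finset.sum_add_distrib]
  map_smul' a l := by
    simp [smul_smul, Finset.smul_sum]

lemma exists_boundK (A : Matrix (Fin m) (Fin n) ℝ) (t : Finset (Fin m)) :
    ∃ K : ℝ, 0 ≤ K ∧
      (LinearIndependent ℝ (fun i : t => A i) →
        IsClosed (coneOf A t) ∧
        ∀ l : Fin m → ℝ, (∀ i, 0 ≤ l i) →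
          ∑ i ∈ t, l i ≤ K * ‖∑ i ∈ t, l i • A i‖) := by
  classical
  by_cases hind : LinearIndependent ℝ (fun i : t => A i)
  · set T := rowMap A t with hT
    have hinj : Function.Injective T := by
      rw [← LinearMap.ker_eq_bot, LinearMap.ker_eq_bot']
      intro l hl
      have := Fintype.linearIndependent_iff.mp hind l hl
      funext i; exact this i
    obtain ⟨K₀, hK₀pos, hanti⟩ :=
      T.exists_antilipschitzWith (LinearMap.ker_eq_bot.mpr hinj)
    have hTc : Continuous T := T.continuous_of_finiteDimensional
    have hnormle : ∀ l : ↥t → ℝ, ‖l‖ ≤ K₀ * ‖T l‖ := by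
      intro l
      have := hanti.le_mul_dist l 0
      simpa [map_zero] using this
    -- the image description
    have himage : coneOf A t = T '' {l | ∀ i, 0 ≤ l i} := by
      ext w
      constructor
      · rintro ⟨l, hl, rfl⟩
        refine ⟨fun i => l i, fun i => hl i, ?_⟩
        rw [hT]
        show ∑ i : t, l i • A (i : Fin m) = _
        rw [Finset.sum_coe_sort t (fun i => l i • A i)]
      · rintro ⟨l, hl, rfl⟩
        refine ⟨fun i => if h : i ∈ t then l ⟨i, h⟩ else 0, fun i => ?_, ?_⟩
        · dsimp only; split
          · apply hl
          · exact le_rfl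
        · show _ = ∑ i ∈ t, _
          rw [← Finset.sum_coe_sort t
            (fun i => (if h : i ∈ t then l ⟨i, h⟩ else 0) • A i)]
          refine (Finset.sum_congr rfl fun i _ => ?_).symm
          simp [i.2]
    refine ⟨(t.card : ℝ) * K₀, by positivity, fun _ => ⟨?_, ?_⟩⟩
    · rw [himage]
      have hTu : UniformContinuous T := by
        have := (LinearMap.toContinuousLinearMap T).uniformContinuous
        simpa using this
      have hce : IsClosedEmbedding T := hanti.isClosedEmbedding hTu
      refine hce.isClosedMap _ ?_
      have : {l : ↥t → ℝ | ∀ i, 0 ≤ l i} = ⋂ i, {l : ↥t → ℝ | 0 ≤ l i} := by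
        ext l; simp [Set.mem_iInter]
      rw [this]
      exact isClosed_iInter fun i =>
        isClosed_le continuous_const (continuous_apply i)
    · intro l hl
      set lr : ↥t → ℝ := fun i => l i with hlr
      have hTl : T lr = ∑ i ∈ t, l i • A i := by
        show ∑ i : t, l i • A (i : Fin m) = _
        rw [Finset.sum_coe_sort t (fun i => l i • A i)]
      have h1 : ∑ i ∈ t, l i ≤ (t.card : ℝ) * ‖lr‖ := by
        rw [← Finset.sum_attach t (fun i => l i)]
        calc ∑ i ∈ t.attach, l i ≤ ∑ _i ∈ t.attach, ‖lr‖ := by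
              refine Finset.sum_le_sum fun i _ => ?_
              have : |lr i| ≤ ‖lr‖ := by
                rw [← Real.norm_eq_abs]
                exact norm_le_pi_norm lr i
              have h2 := le_abs_self (lr i)
              simpa [hlr] using h2.trans this
          _ = (t.card : ℝ) * ‖lr‖ := by simp [mul_comm]
      calc ∑ i ∈ t, l i ≤ (t.card : ℝ) * ‖lr‖ := h1
        _ ≤ (t.card : ℝ) * (K₀ * ‖T lr‖) := by
            refine mul_le_mul_of_nonneg_left (hnormle lr) (by positivity)
        _ = (t.card : ℝ) * K₀ * ‖∑ i ∈ t, l i • A i‖ := by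
            rw [hTl]; ring
  · exact ⟨0, le_rfl, fun h => absurd h hind⟩

lemma exists_L (A : Matrix (Fin m) (Fin n) ℝ) :
    ∃ L : ℝ, 0 ≤ L ∧ (∀ s : Finset (Fin m), IsClosed (coneOf A s)) ∧
      ∀ t : Finset (Fin m), LinearIndependent ℝ (fun i : t => A i) →
        ∀ l : Fin m → ℝ, (∀ i, 0 ≤ l i) →
          ∑ i ∈ t, l i ≤ L * ‖∑ i ∈ t, l i • A i‖ := by
  classical
  choose K hK0 hK using exists_boundK A
  refine ⟨∑ t : Finset (Fin m), K t, Finset.sum_nonneg fun t _ => hK0 t, ?_, ?_⟩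
  · intro s
    have hdecomp : coneOf A s =
        ⋃ t ∈ (s.powerset.filter (fun t : Finset (Fin m) => LinearIndependent ℝ (fun i : ↥t => A i))),
          coneOf A t := by
      ext v
      simp only [Set.mem_iUnion, Finset.mem_filter, Finset.mem_powerset]
      constructor
      · intro hv
        obtain ⟨t, hts, hind, hvt⟩ := caratheodory_cone A s v hv
        exact ⟨t, ⟨hts, hind⟩, hvt⟩
      · rintro ⟨t, ⟨hts, _⟩, hvt⟩
        exact coneOf_mono A hts hvt
    rw [hdecomp]
    refine Set.Finite.isClosed_biUnion (Finset.finite_toSet _) fun t ht => ?_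
    have hind := (Finset.mem_filter.mp ht).2
    exact ((hK t) hind).1
  · intro t hind l hl
    have h1 := ((hK t) hind).2 l hl
    have h2 : K t ≤ ∑ t : Finset (Fin m), K t :=
      Finset.single_le_sum (fun t _ => hK0 t) (Finset.mem_univ t)
    exact h1.trans (mul_le_mul_of_nonneg_right h2 (norm_nonneg _))

lemma key_infDist (A : Matrix (Fin m) (Fin n) ℝ) {L : ℝ} (hL0 : 0 ≤ L)
    (hclosed : ∀ s : Finset (Fin m), IsClosed (coneOf A s))
    (hbound : ∀ t : Finset (Fin m), LinearIndependent ℝ (fun i : ↥t => A i) →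
      ∀ l : Fin m → ℝ, (∀ i, 0 ≤ l i) → ∑ i ∈ t, l i ≤ L * ‖∑ i ∈ t, l i • A i‖)
    (b : Fin m → ℝ) (hne : {z : Fin n → ℝ | A.mulVec z ≤ b}.Nonempty)
    (hcomp : IsCompact {z : Fin n → ℝ | A.mulVec z ≤ b})
    (x : Fin n → ℝ) (c : ℝ) (hc : 0 ≤ c) (hxc : ∀ i, A.mulVec x i ≤ b i + c) :
    Metric.infDist x {z : Fin n → ℝ | A.mulVec z ≤ b} ≤ L * c := by
  classical
  set P := {z : Fin n → ℝ | A.mulVec z ≤ b} with hP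
  -- the squared-distance function
  set f : (Fin n → ℝ) → ℝ := fun w => (x - w) ⬝ᵥ (x - w) with hf
  have hfc : Continuous f := by
    apply continuous_finset_sum
    intro i _
    exact ((continuous_const.sub (continuous_apply i)).mul
      (continuous_const.sub (continuous_apply i)))
  obtain ⟨y, hyP, hymin⟩ := hcomp.exists_isMinOn hne hfc.continuousOn
  -- membership unfolding
  have hyPle : ∀ i, A.mulVec y i ≤ b i := fun i => hyP i
  -- convexity steps stay in P
  have hPconv : ∀ z ∈ P, ∀ τ : ℝ, 0 ≤ τ → τ ≤ 1 → y + τ • (z - y) ∈ P := by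
    intro z hz τ hτ0 hτ1
    intro i
    have hzi : A.mulVec z i ≤ b i := hz i
    have hyi := hyPle i
    have : A.mulVec (y + τ • (z - y)) i
        = A.mulVec y i + τ * (A.mulVec z i - A.mulVec y i) := by
      rw [Matrix.mulVec_add, Matrix.mulVec_smul, Matrix.mulVec_sub]
      simp [smul_eq_mul]
    rw [this]
    nlinarith
  -- variational inequality
  have hvar : ∀ z ∈ P, (x - y) ⬝ᵥ (z - y) ≤ 0 := by
    intro z hz
    by_contra hpos
    push_neg at hpos
    set v := x - y with hv
    set d := z - y with hd
    have hdd0 : 0 ≤ d ⬝ᵥ d := Finset.sum_nonneg fun i _ => mul_self_nonneg _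
    have hddpos : 0 < d ⬝ᵥ d := by
      rcases hdd0.eq_or_lt with h | h
      · exfalso
        have hd0 : d = 0 := by
          funext i
          have := (Finset.sum_eq_zero_iff_of_nonneg
            (fun i _ => mul_self_nonneg (d i))).mp h.symm i (Finset.mem_univ i)
          exact mul_self_eq_zero.mp this
        rw [hd0] at hpos
        simp [dotProduct_zero] at hpos
      · exact h
    set τ := min 1 ((v ⬝ᵥ d) / (d ⬝ᵥ d)) with hτ
    have hτpos : 0 < τ := lt_min one_pos (div_pos hpos hddpos)
    have hτ1 : τ ≤ 1 := min_le_left _ _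
    have hzP' := hPconv z hz τ hτpos.le hτ1
    have hexp : f (y + τ • d) = f y - 2*τ*(v ⬝ᵥ d) + τ^2 * (d ⬝ᵥ d) := by
      have h1 : x - (y + τ • d) = v - τ • d := by rw [hv]; abel
      rw [hf]
      simp only [h1]
      show (v - τ • d) ⬝ᵥ (v - τ • d) = v ⬝ᵥ v - 2*τ*(v ⬝ᵥ d) + τ^2 * (d ⬝ᵥ d)
      simp only [sub_dotProduct, dotProduct_sub,
        smul_dotProduct, dotProduct_smul, smul_eq_mul,
        dotProduct_comm d v]
      ring
    have hmin2 : f y ≤ f (y + τ • d) := hymin hzP'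
    rw [hexp] at hmin2
    have h2 : 2 * (v ⬝ᵥ d) ≤ τ * (d ⬝ᵥ d) := by nlinarith
    have h3 : τ * (d ⬝ᵥ d) ≤ v ⬝ᵥ d := by
      have : τ ≤ (v ⬝ᵥ d) / (d ⬝ᵥ d) := min_le_right _ _
      calc τ * (d ⬝ᵥ d) ≤ ((v ⬝ᵥ d) / (d ⬝ᵥ d)) * (d ⬝ᵥ d) :=
            mul_le_mul_of_nonneg_right this hdd0
        _ = v ⬝ᵥ d := div_mul_cancel₀ _ hddpos.ne'
    linarith
  -- active set
  set J : Finset (Fin m) := Finset.univ.filter (fun i => A.mulVec y i = b i) with hJ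
  -- the residual lies in the cone of active rows
  have hvJ : x - y ∈ coneOf A J := by
    by_contra hnot
    obtain ⟨g, u, hgu, hugv⟩ :=
      geometric_hahn_banach_closed_point (convex_coneOf A J) (hclosed J) hnot
    have hu0 : 0 < u := by
      have := hgu 0 (zero_mem_coneOf A J)
      simpa using this
    have hgA : ∀ i ∈ J, g (A i) ≤ 0 := by
      intro i hi
      by_contra hgi
      push_neg at hgi
      set σ := (u + 1) / g (A i) with hσ
      have hσ0 : 0 ≤ σ := div_nonneg (by linarith) hgi.le
      have hmem : σ • A i ∈ coneOf A J := by
        refine ⟨fun k => if k = i then σ else 0, fun k => ?_, ?_⟩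
        · dsimp only; split
          · exact hσ0
          · exact le_rfl
        · rw [Finset.sum_eq_single_of_mem i hi
            (fun k _ hk => by simp [hk])]
          simp
      have := hgu _ hmem
      rw [g.map_smul, smul_eq_mul, hσ, div_mul_cancel₀ _ (ne_of_gt hgi)] at this
      linarith
    -- represent g by a vector
    set gv : Fin n → ℝ := fun j => g (fun k => if j = k then 1 else 0) with hgv
    have hrep : ∀ w : Fin n → ℝ, w ⬝ᵥ gv = g w := by
      intro w
      conv_rhs => rw [pi_eq_sum_univ w, map_sum]
      refine Finset.sum_congr rfl fun j _ => ?_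
      rw [g.map_smul, smul_eq_mul]
    -- a small step in direction gv stays in P
    have hstep : ∀ᶠ τ in 𝓝[>] (0:ℝ), (y + τ • gv) ∈ P ∧ 0 < τ := by
      rw [eventually_and]
      constructor
      · have hforall : ∀ i : Fin m, ∀ᶠ τ in 𝓝[>] (0:ℝ),
            A.mulVec (y + τ • gv) i ≤ b i := by
          intro i
          have hform : ∀ τ : ℝ, A.mulVec (y + τ • gv) i
              = A.mulVec y i + τ * A.mulVec gv i := by
            intro τ
            rw [Matrix.mulVec_add, Matrix.mulVec_smul]
            simp [smul_eq_mul]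
          by_cases hi : i ∈ J
          · have hyi : A.mulVec y i = b i := by
              simpa [hJ] using hi
            have hgvi : A.mulVec gv i ≤ 0 := by
              have : A.mulVec gv i = g (A i) := hrep (A i)
              rw [this]
              exact hgA i hi
            filter_upwards [self_mem_nhdsWithin] with τ hτ
            rw [hform τ, hyi]
            have : (0:ℝ) < τ := hτ
            nlinarith
          · have hyi : A.mulVec y i < b i := by
              refine lt_of_le_of_ne (hyPle i) ?_
              simpa [hJ] using hi
            have htend : Filter.Tendsto (fun τ : ℝ => A.mulVec y i + τ * A.mulVec gv i)
                (𝓝[>] (0:ℝ)) (𝓝 (A.mulVec y i)) := by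
              have : Filter.Tendsto (fun τ : ℝ => A.mulVec y i + τ * A.mulVec gv i)
                  (𝓝 (0:ℝ)) (𝓝 (A.mulVec y i + 0 * A.mulVec gv i)) := by
                exact (continuous_const.add
                  (continuous_id.mul continuous_const)).tendsto 0
              rw [zero_mul, add_zero] at this
              exact this.mono_left nhdsWithin_le_nhds
            filter_upwards [htend.eventually_lt_const hyi] with τ hτ
            rw [hform τ]
            exact hτ.le
        exact eventually_all.mpr hforall
      · exact self_mem_nhdsWithin
    obtain ⟨τ, hyτP, hτpos⟩ := hstep.exists
    have hle := hvar _ hyτP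
    have heq : y + τ • gv - y = τ • gv := by abel
    rw [heq, dotProduct_smul, smul_eq_mul, hrep] at hle
    have : 0 < g (x - y) := lt_trans hu0 hugv
    nlinarith
  -- Caratheodory
  obtain ⟨t, htJ, hind, l, hl0, hvl⟩ := caratheodory_cone A J _ hvJ
  set v := x - y with hv
  -- estimate ⟨v, v⟩ ≤ (∑ l) * c
  have hAv : ∀ i ∈ t, A i ⬝ᵥ v ≤ c := by
    intro i hit
    have hiJ : i ∈ J := htJ hit
    have hyi : A.mulVec y i = b i := by simpa [hJ] using hiJ
    have : A i ⬝ᵥ v = A.mulVec x i - A.mulVec y i := by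
      rw [hv, dotProduct_sub]
      rfl
    rw [this, hyi]
    have := hxc i
    linarith
  have hvvle : v ⬝ᵥ v ≤ (∑ i ∈ t, l i) * c := by
    have hgen : ∀ w : Fin n → ℝ,
        (∑ i ∈ t, l i • A i) ⬝ᵥ w = ∑ i ∈ t, l i * (A i ⬝ᵥ w) := by
      intro w
      simp only [dotProduct, Finset.sum_apply, Pi.smul_apply, smul_eq_mul,
        Finset.sum_mul, Finset.mul_sum]
      rw [Finset.sum_comm]
      exact Finset.sum_congr rfl fun i _ => Finset.sum_congr rfl fun j _ => by ring
    have hsumdot : v ⬝ᵥ v = ∑ i ∈ t, l i * (A i ⬝ᵥ v) := by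
      have h0 : v ⬝ᵥ v = (∑ i ∈ t, l i • A i) ⬝ᵥ v := by rw [← hvl]
      rw [h0, hgen v]
    rw [hsumdot, Finset.sum_mul]
    refine Finset.sum_le_sum fun i hit => ?_
    exact mul_le_mul_of_nonneg_left (hAv i hit) (hl0 i)
  have hsl : ∑ i ∈ t, l i ≤ L * ‖v‖ := by
    have := hbound t hind l hl0
    rw [← hvl] at this
    exact this
  have hvv0 : 0 ≤ v ⬝ᵥ v := Finset.sum_nonneg fun i _ => mul_self_nonneg _
  have hnv : ‖v‖ ^ 2 ≤ v ⬝ᵥ v := by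
    have hnorm : ‖v‖ ≤ Real.sqrt (v ⬝ᵥ v) := by
      rw [pi_norm_le_iff_of_nonneg (Real.sqrt_nonneg _)]
      intro i
      rw [Real.norm_eq_abs]
      have h1 : v i * v i ≤ v ⬝ᵥ v :=
        Finset.single_le_sum (fun j _ => mul_self_nonneg (v j)) (Finset.mem_univ i)
      have h2 : |v i| = Real.sqrt (v i * v i) := by
        rw [Real.sqrt_mul_self_eq_abs]
      rw [h2]
      exact Real.sqrt_le_sqrt h1
    calc ‖v‖ ^ 2 ≤ Real.sqrt (v ⬝ᵥ v) ^ 2 := by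
          exact pow_le_pow_left₀ (norm_nonneg _) hnorm 2
      _ = v ⬝ᵥ v := Real.sq_sqrt hvv0
  have hchain : ‖v‖ ^ 2 ≤ L * ‖v‖ * c := by
    calc ‖v‖ ^ 2 ≤ v ⬝ᵥ v := hnv
      _ ≤ (∑ i ∈ t, l i) * c := hvvle
      _ ≤ (L * ‖v‖) * c := mul_le_mul_of_nonneg_right hsl hc
      _ = L * ‖v‖ * c := rfl
  have hdxy : Metric.infDist x P ≤ ‖v‖ := by
    have h := Metric.infDist_le_dist_of_mem (x := x) hyP
    rwa [dist_eq_norm] at h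
  rcases eq_or_lt_of_le (norm_nonneg v) with h0 | h0
  · refine hdxy.trans ?_
    rw [← h0]
    exact mul_nonneg hL0 hc
  · have : ‖v‖ ≤ L * c := by nlinarith
    exact hdxy.trans this

theorem polytope_lipschitz_in_rhs (m n : ℕ) (A : Matrix (Fin m) (Fin n) ℝ) :
    ∃ L : ℝ, ∀ bx by' : Fin m → ℝ,
      {x : Fin n → ℝ | A.mulVec x ≤ bx}.Nonempty →
      {x : Fin n → ℝ | A.mulVec x ≤ by'}.Nonempty →
      IsCompact {x : Fin n → ℝ | A.mulVec x ≤ bx} →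
      IsCompact {x : Fin n → ℝ | A.mulVec x ≤ by'} →
      Metric.hausdorffDist {x : Fin n → ℝ | A.mulVec x ≤ bx}
        {x : Fin n → ℝ | A.mulVec x ≤ by'} ≤ L * ‖bx - by'‖ := by
  obtain ⟨L, hL0, hclosed, hbound⟩ := exists_L A
  refine ⟨L, ?_⟩
  intro bx by' hnex hney hcx hcy
  have hr0 : 0 ≤ L * ‖bx - by'‖ := mul_nonneg hL0 (norm_nonneg _)
  have hcomp : ∀ (b b' : Fin m → ℝ) (z : Fin n → ℝ), A.mulVec z ≤ b →
      ∀ i, A.mulVec z i ≤ b' i + ‖b - b'‖ := by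
    intro b b' z hz i
    have h1 : A.mulVec z i ≤ b i := hz i
    have h2 : b i - b' i ≤ ‖b - b'‖ := by
      have h3 := norm_le_pi_norm (b - b') i
      rw [Real.norm_eq_abs] at h3
      have h4 := le_abs_self ((b - b') i)
      have h5 : (b - b') i = b i - b' i := rfl
      linarith
    linarith
  refine Metric.hausdorffDist_le_of_infDist hr0 ?_ ?_
  · intro z hz
    exact key_infDist A hL0 hclosed hbound by' hney hcy z ‖bx - by'‖ (norm_nonneg _)
      (hcomp bx by' z hz)
  · intro z hz
    have h := key_infDist A hL0 hclosed hbound bx hnex hcx z ‖by' - bx‖ (norm_nonneg _)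
      (hcomp by' bx z hz)
    rwa [norm_sub_rev] at h
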